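/- Let m ≥ 1, let U be an m × m complex unitary matrix, let P be an m × m complex matrix with P² = P and Pᴴ = P, let v₀ and ψ be unit vectors in ℂ^m, and let a ∈ (0, 1] be a real number with P·(U·v₀) = a·ψ. Set k := ⌈π/(4·arcsin(a)) − 1/2⌉ and θ := π/(4k+2). Let R be a 2 × 2 complex unitary matrix whose (0,0) entry equals sin(θ)/a, let e₀ := (1, 0) ∈ ℂ², define U' := R ⊗ U (Kronecker product), and define W' := U'·(2·(e₀⊗v₀)(e₀⊗v₀)ᴴ − I)·U'ᴴ·(I − 2·(e₀e₀ᴴ ⊗ P)). Then (W')^k · (U' · (e₀ ⊗ v₀)) = e₀ ⊗ ψ. -/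

import Mathlib

open Matrix Kronecker Real

lemma aux_kron_mulVec {n₁ n₂ : Type*} [Fintype n₁] [Fintype n₂]
    (A : Matrix n₁ n₁ ℂ) (B : Matrix n₂ n₂ ℂ) (x : n₁ → ℂ) (y : n₂ → ℂ) :
    (A ⊗ₖ B).mulVec (fun p => x p.1 * y p.2) = fun p => A.mulVec x p.1 * B.mulVec y p.2 := by
  funext p
  simp only [Matrix.mulVec, dotProduct, Matrix.kroneckerMap_apply, Fintype.sum_prod_type]
  rw [Finset.sum_mul_sum]
  exact Finset.sum_congr rfl fun i _ => Finset.sum_congr rfl fun j _ => by ring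

lemma aux_kron_dot {n₁ n₂ : Type*} [Fintype n₁] [Fintype n₂]
    (x x' : n₁ → ℂ) (y y' : n₂ → ℂ) :
    star (fun p => x p.1 * y p.2 : n₁ × n₂ → ℂ) ⬝ᵥ (fun p => x' p.1 * y' p.2)
      = (star x ⬝ᵥ x') * (star y ⬝ᵥ y') := by
  simp only [dotProduct, Pi.star_apply, star_mul', Fintype.sum_prod_type]
  rw [Finset.sum_mul_sum]
  exact Finset.sum_congr rfl fun i _ => Finset.sum_congr rfl fun j _ => by ring

lemma aux_kron_conjT {n₁ n₂ : Type*} [Fintype n₁] [Fintype n₂]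
    (A : Matrix n₁ n₁ ℂ) (B : Matrix n₂ n₂ ℂ) : (A ⊗ₖ B)ᴴ = Aᴴ ⊗ₖ Bᴴ := by
  ext i j
  simp [Matrix.conjTranspose_apply, Matrix.kroneckerMap_apply, mul_comm]

lemma aux_vmv_mulVec {n : Type*} [Fintype n] (u v x : n → ℂ) :
    (Matrix.vecMulVec u v).mulVec x = (v ⬝ᵥ x) • u := by
  funext i
  simp only [Matrix.mulVec, dotProduct, Matrix.vecMulVec_apply, Pi.smul_apply,
    smul_eq_mul, Finset.sum_mul]
  exact Finset.sum_congr rfl fun j _ => by ring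

lemma aux_isometry {n : Type*} [Fintype n] [DecidableEq n] (M : Matrix n n ℂ)
    (hM : Mᴴ * M = 1) (v : n → ℂ) :
    star (M.mulVec v) ⬝ᵥ (M.mulVec v) = star v ⬝ᵥ v := by
  rw [Matrix.star_mulVec, Matrix.dotProduct_mulVec, Matrix.vecMul_vecMul, hM, Matrix.vecMul_one]

lemma aux_self_dot_zero {n : Type*} [Fintype n] (v : n → ℂ) (h : star v ⬝ᵥ v = 0) : v = 0 := by
  have h1 : ((∑ j, Complex.normSq (v j) : ℝ) : ℂ) = 0 := by
    push_cast
    rw [← h]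
    simp [dotProduct, Complex.normSq_eq_conj_mul_self]
  have h2 : ∑ j, Complex.normSq (v j) = 0 := by exact_mod_cast h1
  have h3 : ∀ j ∈ Finset.univ, Complex.normSq (v j) = 0 :=
    (Finset.sum_eq_zero_iff_of_nonneg (fun j _ => Complex.normSq_nonneg _)).mp h2
  funext i
  exact Complex.normSq_eq_zero.mp (h3 i (Finset.mem_univ i))

noncomputable def betaSeq (θ : ℝ) : ℕ → ℝ
  | 0 => 1
  | j+1 => (2*(Real.cos θ)^2 - 1) * betaSeq θ j - 2 * Real.sin θ * Real.sin ((2*(j:ℝ)+1)*θ)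

lemma betaSeq_cos (θ : ℝ) : ∀ j : ℕ, Real.cos θ * betaSeq θ j = Real.cos ((2*(j:ℝ)+1)*θ)
  | 0 => by norm_num [betaSeq]
  | j+1 => by
    have h := betaSeq_cos θ j
    have harg : (2*((j:ℕ):ℝ)+1)*θ + 2*θ = (2*(((j:ℕ):ℝ)+1)+1)*θ := by ring
    push_cast
    rw [betaSeq, ← harg, Real.cos_add, Real.cos_two_mul, Real.sin_two_mul]
    linear_combination (2*(Real.cos θ)^2 - 1) * h

lemma betaSeq_sin (θ : ℝ) (j : ℕ) :
    Real.sin ((2*((j:ℝ)+1)+1)*θ)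
      = 2*(-(Real.sin ((2*(j:ℝ)+1)*θ) * Real.sin θ) + betaSeq θ j * (Real.cos θ)^2) * Real.sin θ
        + Real.sin ((2*(j:ℝ)+1)*θ) := by
  have hc := betaSeq_cos θ j
  have harg : (2*((j:ℝ)+1)+1)*θ = (2*(j:ℝ)+1)*θ + 2*θ := by ring
  rw [harg, Real.sin_add, Real.cos_two_mul, Real.sin_two_mul]
  linear_combination (2*Real.sin ((2*(j:ℝ)+1)*θ)) * (Real.sin_sq_add_cos_sq θ)
    - (2*Real.sin θ*Real.cos θ) * hc

theorem exact_amplitude_amplification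
    (m : ℕ) (hm : 1 ≤ m)
    (U P : Matrix (Fin m) (Fin m) ℂ)
    (hU : U * Uᴴ = 1) (hU' : Uᴴ * U = 1)
    (hP : P * P = P) (hP' : Pᴴ = P)
    (v₀ ψ : Fin m → ℂ)
    (hv₀ : star v₀ ⬝ᵥ v₀ = 1) (hψ : star ψ ⬝ᵥ ψ = 1)
    (a : ℝ) (ha : 0 < a) (ha1 : a ≤ 1)
    (hstate : P.mulVec (U.mulVec v₀) = (a : ℂ) • ψ)
    (k : ℕ) (hk : k = ⌈π / (4 * Real.arcsin a) - 1 / 2⌉₊)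
    (θ : ℝ) (hθ : θ = π / (4 * k + 2))
    (R : Matrix (Fin 2) (Fin 2) ℂ)
    (hR : R * Rᴴ = 1) (hR' : Rᴴ * R = 1)
    (hR00 : R 0 0 = ((Real.sin θ / a : ℝ) : ℂ))
    (e₀ : Fin 2 → ℂ) (he₀ : e₀ = ![1, 0])
    (U' : Matrix (Fin 2 × Fin m) (Fin 2 × Fin m) ℂ) (hU'def : U' = R ⊗ₖ U)
    (w₀ : Fin 2 × Fin m → ℂ) (hw₀ : w₀ = fun p => e₀ p.1 * v₀ p.2)
    (W' : Matrix (Fin 2 × Fin m) (Fin 2 × Fin m) ℂ)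
    (hW' : W' = U' * ((2 : ℂ) • Matrix.vecMulVec w₀ (star w₀) - 1) * U'ᴴ
            * (1 - (2 : ℂ) • (Matrix.vecMulVec e₀ (star e₀) ⊗ₖ P))) :
    (W' ^ k).mulVec (U'.mulVec w₀) = fun p => e₀ p.1 * ψ p.2 := by
  have ha0 : (a:ℂ) ≠ 0 := by exact_mod_cast ha.ne'
  have hPψ : P.mulVec ψ = ψ := by
    have h1 : (a:ℂ) • P.mulVec ψ = (a:ℂ) • ψ := by
      rw [← Matrix.mulVec_smul, ← hstate, Matrix.mulVec_mulVec, hP, hstate]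
    exact smul_right_injective _ ha0 h1
  set g : Fin 2 × Fin m → ℂ := fun p => e₀ p.1 * ψ p.2 with hg
  set s : Fin 2 × Fin m → ℂ := U'.mulVec w₀ with hs
  set Q : Matrix (Fin 2 × Fin m) (Fin 2 × Fin m) ℂ :=
    Matrix.vecMulVec e₀ (star e₀) ⊗ₖ P with hQ
  have he00 : star e₀ ⬝ᵥ e₀ = 1 := by
    simp [he₀, dotProduct, Fin.sum_univ_two]
  have hdot0 : ∀ w : Fin 2 → ℂ, star e₀ ⬝ᵥ w = w 0 := by
    intro w; simp [he₀, dotProduct, Fin.sum_univ_two]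
  have hRe : R.mulVec e₀ 0 = R 0 0 := by
    simp [he₀, Matrix.mulVec, dotProduct, Fin.sum_univ_two]
  have hUni : U'ᴴ * U' = 1 := by
    rw [hU'def, aux_kron_conjT, ← Matrix.mul_kronecker_mul, hR', hU', Matrix.one_kronecker_one]
  have hUni' : U' * U'ᴴ = 1 := by
    rw [hU'def, aux_kron_conjT, ← Matrix.mul_kronecker_mul, hR, hU, Matrix.one_kronecker_one]
  have hsU : s = fun p => R.mulVec e₀ p.1 * U.mulVec v₀ p.2 := by
    rw [hs, hU'def, hw₀, aux_kron_mulVec]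
  have hQg : Q.mulVec g = g := by
    rw [hQ, hg, aux_kron_mulVec, aux_vmv_mulVec, he00, hPψ, one_smul]
  have hQs : Q.mulVec s = ((Real.sin θ : ℝ) : ℂ) • g := by
    rw [hQ, hsU, aux_kron_mulVec, aux_vmv_mulVec, hstate, hdot0, hRe, hR00]
    funext p
    simp only [hg, Pi.smul_apply, smul_eq_mul]
    push_cast
    field_simp
  have hQH : Qᴴ = Q := by
    rw [hQ, aux_kron_conjT, hP']
    ext i j
    simp [Matrix.conjTranspose_apply, Matrix.vecMulVec_apply, mul_comm]
  have hgg : star g ⬝ᵥ g = 1 := by rw [hg, aux_kron_dot, he00, hψ, one_mul]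
  have hww : star w₀ ⬝ᵥ w₀ = 1 := by rw [hw₀, aux_kron_dot, he00, hv₀, one_mul]
  have hss : star s ⬝ᵥ s = 1 := by rw [hs, aux_isometry U' hUni, hww]
  have hsg : star s ⬝ᵥ g = ((Real.sin θ : ℝ) : ℂ) := by
    calc star s ⬝ᵥ g = star s ⬝ᵥ Q.mulVec g := by rw [hQg]
      _ = (star s ᵥ* Q) ⬝ᵥ g := Matrix.dotProduct_mulVec _ _ _
      _ = star (Q.mulVec s) ⬝ᵥ g := by
            conv_rhs => rw [Matrix.star_mulVec, hQH]
      _ = star (((Real.sin θ : ℝ):ℂ) • g) ⬝ᵥ g := by rw [hQs]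
      _ = ((Real.sin θ : ℝ):ℂ) := by
          rw [star_smul, smul_dotProduct, hgg, RCLike.star_def, Complex.conj_ofReal,
            smul_eq_mul, mul_one]
  have hgs : star g ⬝ᵥ s = ((Real.sin θ : ℝ) : ℂ) := by
    rw [Matrix.star_dotProduct, hsg, RCLike.star_def, Complex.conj_ofReal]
  set b : Fin 2 × Fin m → ℂ := s - ((Real.sin θ : ℝ):ℂ) • g with hb
  have hsb_eq : s = ((Real.sin θ : ℝ):ℂ) • g + b := by rw [hb]; abel
  have hQb : Q.mulVec b = 0 := by
    rw [hb, Matrix.mulVec_sub, Matrix.mulVec_smul, hQs, hQg, sub_self]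
  have hpc : ((Real.sin θ : ℝ):ℂ)^2 + ((Real.cos θ : ℝ):ℂ)^2 = 1 := by
    have := Real.sin_sq_add_cos_sq θ
    push_cast
    exact_mod_cast congrArg (Complex.ofReal) this
  have hsb : star s ⬝ᵥ b = ((Real.cos θ : ℝ):ℂ)^2 := by
    rw [hb, dotProduct_sub, dotProduct_smul, hss, hsg, smul_eq_mul]
    linear_combination -hpc
  have hbb : star b ⬝ᵥ b = ((Real.cos θ : ℝ):ℂ)^2 := by
    rw [hb, star_sub, star_smul, sub_dotProduct, dotProduct_sub,
      dotProduct_sub, smul_dotProduct, smul_dotProduct,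
      dotProduct_smul, dotProduct_smul, hss, hsg, hgs, hgg]
    simp only [smul_eq_mul, Complex.star_def, Complex.conj_ofReal, mul_one]
    linear_combination -hpc
  have hSv : ∀ z, (U' * ((2:ℂ) • Matrix.vecMulVec w₀ (star w₀) - 1) * U'ᴴ).mulVec z
      = (2 * (star s ⬝ᵥ z)) • s - z := by
    intro z
    have hz : star w₀ ⬝ᵥ U'ᴴ.mulVec z = star s ⬝ᵥ z := by
      conv_rhs => rw [hs, Matrix.star_mulVec]
      rw [Matrix.dotProduct_mulVec]
    rw [← Matrix.mulVec_mulVec, ← Matrix.mulVec_mulVec,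
      Matrix.sub_mulVec, Matrix.smul_mulVec, aux_vmv_mulVec, Matrix.one_mulVec, hz,
      Matrix.mulVec_sub, Matrix.mulVec_smul, Matrix.mulVec_smul, ← hs,
      Matrix.mulVec_mulVec, hUni', Matrix.one_mulVec, smul_smul]
  have key : ∀ j : ℕ, (W' ^ j).mulVec s
      = ((Real.sin ((2*(j:ℝ)+1)*θ) : ℝ):ℂ) • g + ((betaSeq θ j : ℝ):ℂ) • b := by
    intro j
    induction j with
    | zero =>
      rw [pow_zero, Matrix.one_mulVec, show (2*((0:ℕ):ℝ)+1)*θ = θ by push_cast; ring,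
        show betaSeq θ 0 = 1 from rfl, Complex.ofReal_one, one_smul]
      exact hsb_eq
    | succ j ih =>
      have step1 : (1 - (2:ℂ) • Q).mulVec
          (((Real.sin ((2*(j:ℝ)+1)*θ) : ℝ):ℂ) • g + ((betaSeq θ j : ℝ):ℂ) • b)
          = (-((Real.sin ((2*(j:ℝ)+1)*θ) : ℝ):ℂ)) • g + ((betaSeq θ j : ℝ):ℂ) • b := by
        rw [Matrix.sub_mulVec, Matrix.one_mulVec, Matrix.smul_mulVec,
          Matrix.mulVec_add, Matrix.mulVec_smul, Matrix.mulVec_smul, hQg, hQb, smul_zero,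
          add_zero]
        module
      have step2 : star s ⬝ᵥ ((-((Real.sin ((2*(j:ℝ)+1)*θ) : ℝ):ℂ)) • g
            + ((betaSeq θ j : ℝ):ℂ) • b)
          = -((Real.sin ((2*(j:ℝ)+1)*θ) : ℝ):ℂ) * ((Real.sin θ : ℝ):ℂ)
            + ((betaSeq θ j : ℝ):ℂ) * ((Real.cos θ : ℝ):ℂ)^2 := by
        rw [dotProduct_add, dotProduct_smul, dotProduct_smul, hsg, hsb]
        simp only [smul_eq_mul]
      have harg : (2*((j+1:ℕ):ℝ)+1)*θ = (2*((j:ℝ)+1)+1)*θ := by push_cast; ring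
      rw [pow_succ', ← Matrix.mulVec_mulVec, ih, hW', ← Matrix.mulVec_mulVec, step1, hSv,
        step2, harg, betaSeq_sin θ j,
        show betaSeq θ (j+1)
          = (2*(Real.cos θ)^2 - 1) * betaSeq θ j
            - 2 * Real.sin θ * Real.sin ((2*(j:ℝ)+1)*θ) from rfl,
        hsb_eq]
      push_cast
      module
  have hfin : (2*(k:ℝ)+1)*θ = π/2 := by
    have h4 : (4*(k:ℝ)+2) ≠ 0 := by positivity
    rw [hθ]
    field_simp
    ring
  have h0 : Real.cos θ * betaSeq θ k = 0 := by
    rw [betaSeq_cos θ k, hfin, Real.cos_pi_div_two]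
  rw [key k, hfin, Real.sin_pi_div_two, Complex.ofReal_one, one_smul]
  rcases mul_eq_zero.mp h0 with hc0 | hb0
  · have hbz : b = 0 := by
      have h2 := hbb
      rw [hc0] at h2
      norm_num at h2
      exact aux_self_dot_zero b h2
    rw [hbz, smul_zero, add_zero]
  · rw [hb0, Complex.ofReal_zero, zero_smul, add_zero]
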